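/- Given a stable coloring f : [ℕ]² → ℕ and a uniformly computable sequence of sets R₀, R₁, …, there exists an (f ⊕ R⃗)-computable tournament T such that every infinite transitive subtournament of T is either thin for the limit coloring f̃ or is R⃗-cohesive. -/

import Mathlib

open Classical Filter

noncomputable section

/-- Codes for partial functions recursive in an oracle. -/
inductive OCode : Type
  | zero | succ | left | right | oracle
  | pair (a b : OCode) | comp (a b : OCode) | prec (a b : OCode) | rfind' (a : OCode)

/-- Evaluation of an oracle code with oracle `O`. -/
def OCode.eval (O : ℕ →. ℕ) : OCode → ℕ →. ℕ
  | .zero => pure 0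
  | .succ => Nat.succ
  | .left => ↑fun n : ℕ => n.unpair.1
  | .right => ↑fun n : ℕ => n.unpair.2
  | .oracle => O
  | .pair a b => fun n => Nat.pair <$> a.eval O n <*> b.eval O n
  | .comp a b => fun n => b.eval O n >>= a.eval O
  | .prec a b => Nat.unpaired fun m n =>
      n.rec (a.eval O m) fun y IH => do let i ← IH; b.eval O (Nat.pair m (Nat.pair y i))
  | .rfind' a => fun n => Nat.rfind fun m => (fun k => k = 0) <$> a.eval O (Nat.pair n m)

/-- An injective numbering of oracle codes. -/
def OCode.encodeC : OCode → ℕ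
  | .zero => Nat.pair 0 0
  | .succ => Nat.pair 1 0
  | .left => Nat.pair 2 0
  | .right => Nat.pair 3 0
  | .oracle => Nat.pair 4 0
  | .pair a b => Nat.pair 5 (Nat.pair a.encodeC b.encodeC)
  | .comp a b => Nat.pair 6 (Nat.pair a.encodeC b.encodeC)
  | .prec a b => Nat.pair 7 (Nat.pair a.encodeC b.encodeC)
  | .rfind' a => Nat.pair 8 a.encodeC

/-- `f` is partial recursive in the oracle `O`. -/
def RecIn (O : ℕ →. ℕ) (f : ℕ →. ℕ) : Prop := ∃ c : OCode, c.eval O = f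

/-- The `e`-th partial function recursive in `O` (`Φ_e^O`). -/
def phi (O : ℕ →. ℕ) (e : ℕ) : ℕ →. ℕ :=
  if h : ∃ c : OCode, c.encodeC = e then h.choose.eval O else fun _ => Part.none

/-- The characteristic function of a set of naturals, as an oracle. -/
def chOracle (X : Set ℕ) : ℕ →. ℕ := fun n => Part.some (if n ∈ X then 1 else 0)

/-- A total function as an oracle. -/
def fnOracle (f : ℕ → ℕ) : ℕ →. ℕ := fun n => Part.some (f n)

/-- A two-variable total function as an oracle. -/
def pairFnOracle (f : ℕ → ℕ → ℕ) : ℕ →. ℕ :=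
  fun n => Part.some (f n.unpair.1 n.unpair.2)

/-- The Turing jump of a set `X` : the halting problem relative to `X`. -/
def jumpSet (X : Set ℕ) : Set ℕ := {e | (phi (chOracle X) e e).Dom}

/-- The effective join of two sets of naturals. -/
def joinSet (A B : Set ℕ) : Set ℕ :=
  {n | (n % 2 = 0 ∧ n / 2 ∈ A) ∨ (n % 2 = 1 ∧ n / 2 ∈ B)}

/-- The join of two oracles. -/
def joinO (O₁ O₂ : ℕ →. ℕ) : ℕ →. ℕ :=
  fun n => if n % 2 = 0 then O₁ (n / 2) else O₂ (n / 2)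

/-- Turing reducibility between sets of naturals. -/
def setLEset (A B : Set ℕ) : Prop :=
  RecIn (chOracle B) (fnOracle fun n => if n ∈ A then 1 else 0)


theorem recIn_of_partrec {O : ℕ →. ℕ} {g : ℕ →. ℕ} (h : Nat.Partrec g) : RecIn O g := by
  induction h with
  | zero => exact ⟨.zero, rfl⟩
  | succ => exact ⟨.succ, rfl⟩
  | left => exact ⟨.left, rfl⟩
  | right => exact ⟨.right, rfl⟩
  | pair hf hg ihf ihg =>
    obtain ⟨cf, hf'⟩ := ihf; obtain ⟨cg, hg'⟩ := ihg
    exact ⟨.pair cf cg, by simp only [OCode.eval, hf', hg']; rfl⟩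
  | comp hf hg ihf ihg =>
    obtain ⟨cf, hf'⟩ := ihf; obtain ⟨cg, hg'⟩ := ihg
    exact ⟨.comp cf cg, by simp only [OCode.eval, hf', hg']; rfl⟩
  | prec hf hg ihf ihg =>
    obtain ⟨cf, hf'⟩ := ihf; obtain ⟨cg, hg'⟩ := ihg
    exact ⟨.prec cf cg, by simp only [OCode.eval, hf', hg']; rfl⟩
  | rfind hf ihf =>
    obtain ⟨cf, hf'⟩ := ihf
    exact ⟨.rfind' cf, by simp only [OCode.eval, hf']; rfl⟩

theorem recIn_oracle (O : ℕ →. ℕ) : RecIn O O := ⟨.oracle, rfl⟩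

theorem RecIn.comp' {O f g : ℕ →. ℕ} (hf : RecIn O f) (hg : RecIn O g) :
    RecIn O fun n => g n >>= f := by
  obtain ⟨cf, hf'⟩ := hf; obtain ⟨cg, hg'⟩ := hg
  exact ⟨.comp cf cg, by simp only [OCode.eval, hf', hg']; rfl⟩

theorem RecIn.pair' {O f g : ℕ →. ℕ} (hf : RecIn O f) (hg : RecIn O g) :
    RecIn O fun n => Nat.pair <$> f n <*> g n := by
  obtain ⟨cf, hf'⟩ := hf; obtain ⟨cg, hg'⟩ := hg
  exact ⟨.pair cf cg, by simp only [OCode.eval, hf', hg']; rfl⟩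

theorem recIn_of_primrec {O : ℕ →. ℕ} {g : ℕ → ℕ} (h : Primrec g) :
    RecIn O (fun n => Part.some (g n)) :=
  recIn_of_partrec (Nat.Partrec.of_primrec (Primrec.nat_iff.1 h))

theorem RecIn.of_eq' {O f g : ℕ →. ℕ} (hf : RecIn O f) (h : f = g) : RecIn O g := h ▸ hf

def q1fn (n : ℕ) : ℕ := 2 * Nat.pair (min n.unpair.1 n.unpair.2) (max n.unpair.1 n.unpair.2)

def q2fn (m : ℕ) : ℕ :=
  2 * Nat.pair (m.unpair.2 / 2) (max m.unpair.1.unpair.1 m.unpair.1.unpair.2) + 1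

def g3fn (m : ℕ) : ℕ :=
  if m.unpair.1.unpair.1.unpair.1 < m.unpair.1.unpair.1.unpair.2 then
    (if m.unpair.1.unpair.2 % 2 = 0 then m.unpair.2 else 1 - m.unpair.2)
  else if m.unpair.1.unpair.1.unpair.2 < m.unpair.1.unpair.1.unpair.1 then
    1 - (if m.unpair.1.unpair.2 % 2 = 0 then m.unpair.2 else 1 - m.unpair.2)
  else 0

theorem q1fn_primrec : Primrec q1fn := by
  have h1 : Primrec fun n : ℕ => n.unpair.1 := Primrec.fst.comp Primrec.unpair
  have h2 : Primrec fun n : ℕ => n.unpair.2 := Primrec.snd.comp Primrec.unpair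
  exact Primrec.nat_mul.comp (Primrec.const 2)
    (Primrec₂.natPair.comp (Primrec.nat_min.comp h1 h2) (Primrec.nat_max.comp h1 h2))

theorem q2fn_primrec : Primrec q2fn := by
  have h1 : Primrec fun n : ℕ => n.unpair.1 := Primrec.fst.comp Primrec.unpair
  have h2 : Primrec fun n : ℕ => n.unpair.2 := Primrec.snd.comp Primrec.unpair
  exact Primrec.succ.comp <| Primrec.nat_mul.comp (Primrec.const 2)
    (Primrec₂.natPair.comp (Primrec.nat_div.comp h2 (Primrec.const 2))
      (Primrec.nat_max.comp (h1.comp h1) (h2.comp h1)))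

theorem g3fn_primrec : Primrec g3fn := by
  have h1 : Primrec fun n : ℕ => n.unpair.1 := Primrec.fst.comp Primrec.unpair
  have h2 : Primrec fun n : ℕ => n.unpair.2 := Primrec.snd.comp Primrec.unpair
  have hx : Primrec fun m : ℕ => m.unpair.1.unpair.1.unpair.1 := h1.comp (h1.comp h1)
  have hy : Primrec fun m : ℕ => m.unpair.1.unpair.1.unpair.2 := h2.comp (h1.comp h1)
  have hv : Primrec fun m : ℕ => m.unpair.1.unpair.2 := h2.comp h1
  have hp : Primrec fun m : ℕ =>
      (if m.unpair.1.unpair.2 % 2 = 0 then m.unpair.2 else 1 - m.unpair.2) :=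
    Primrec.ite (PrimrecRel.comp Primrec.eq (Primrec.nat_mod.comp hv (Primrec.const 2))
      (Primrec.const 0)) h2 (Primrec.nat_sub.comp (Primrec.const 1) h2)
  exact Primrec.ite (Primrec.nat_lt.comp hx hy) hp
    (Primrec.ite (Primrec.nat_lt.comp hy hx)
      (Primrec.nat_sub.comp (Primrec.const 1) hp) (Primrec.const 0))

/-- For `u < w`: the tournament points from `u` to `w` iff
`w ∈ R (f u w / 2) ↔ f u w` is even. -/
def Pdef (f : ℕ → ℕ → ℕ) (R : ℕ → Set ℕ) (u w : ℕ) : Prop :=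
  w ∈ R (f u w / 2) ↔ f u w % 2 = 0

/-- The tournament built from `f` and `R`. -/
def Tdef (f : ℕ → ℕ → ℕ) (R : ℕ → Set ℕ) (a b : ℕ) : Prop :=
  (a < b ∧ Pdef f R a b) ∨ (b < a ∧ ¬ Pdef f R b a)

theorem pair_seq_some (n v : ℕ) (p : Part ℕ) (h : p = Part.some v) :
    (Nat.pair <$> Part.some n <*> p) = Part.some (Nat.pair n v) := by
  subst h
  simp only [Seq.seq, Part.map_eq_map, Part.map_some, Part.bind_eq_bind, Part.bind_some]

theorem g3fn_correct (f : ℕ → ℕ → ℕ) (R : ℕ → Set ℕ) (x y : ℕ) :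
    g3fn (Nat.pair (Nat.pair (Nat.pair x y) (f (min x y) (max x y)))
      (if (max x y) ∈ R (f (min x y) (max x y) / 2) then 1 else 0))
    = if Tdef f R x y then 1 else 0 := by
  simp only [g3fn, Nat.unpair_pair]
  rcases lt_trichotomy x y with hlt | heq | hgt
  · simp only [min_eq_left hlt.le, max_eq_right hlt.le, if_pos hlt]
    have hT : Tdef f R x y ↔ Pdef f R x y := by
      simp [Tdef, hlt, lt_asymm hlt]
    rw [hT]
    by_cases hm : f x y % 2 = 0 <;> by_cases hr : y ∈ R (f x y / 2) <;>
      simp [Pdef, hm, hr]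
  · subst heq
    simp [Tdef, lt_irrefl]
  · simp only [min_eq_right hgt.le, max_eq_left hgt.le, if_neg (lt_asymm hgt), if_pos hgt]
    have hT : Tdef f R x y ↔ ¬ Pdef f R y x := by
      simp [Tdef, hgt, lt_asymm hgt]
    rw [hT]
    by_cases hm : f y x % 2 = 0 <;> by_cases hr : x ∈ R (f y x / 2) <;>
      simp [Pdef, hm, hr]

theorem Tdef_recIn (f : ℕ → ℕ → ℕ) (R : ℕ → Set ℕ) :
    RecIn (joinO (pairFnOracle f)
        (fnOracle fun n => if n.unpair.2 ∈ R n.unpair.1 then 1 else 0))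
      (fnOracle fun n => if Tdef f R n.unpair.1 n.unpair.2 then 1 else 0) := by
  generalize hO : joinO (pairFnOracle f)
      (fnOracle fun n => if n.unpair.2 ∈ R n.unpair.1 then 1 else 0) = O
  have hO1 : ∀ a s : ℕ, O (2 * Nat.pair a s) = Part.some (f a s) := by
    intro a s
    rw [← hO]
    have h1 : (2 * Nat.pair a s) % 2 = 0 := Nat.mul_mod_right 2 _
    have h2 : (2 * Nat.pair a s) / 2 = Nat.pair a s := by omega
    simp [joinO, h1, h2, pairFnOracle]
  have hO2 : ∀ i s : ℕ, O (2 * Nat.pair i s + 1)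
      = Part.some (if s ∈ R i then 1 else 0) := by
    intro i s
    rw [← hO]
    have h1 : ¬ (2 * Nat.pair i s + 1) % 2 = 0 := by omega
    have h2 : (2 * Nat.pair i s + 1) / 2 = Nat.pair i s := by omega
    simp [joinO, h1, h2, fnOracle]
  have hA : RecIn O (fun n => Nat.pair <$> Part.some n <*> (Part.some (q1fn n) >>= O)) :=
    RecIn.pair' (recIn_of_primrec Primrec.id)
      (RecIn.comp' (recIn_oracle O) (recIn_of_primrec q1fn_primrec))
  have hB : RecIn O (fun m => Nat.pair <$> Part.some m <*> (Part.some (q2fn m) >>= O)) :=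
    RecIn.pair' (recIn_of_primrec Primrec.id)
      (RecIn.comp' (recIn_oracle O) (recIn_of_primrec q2fn_primrec))
  have hC : RecIn O (fun m => Part.some (g3fn m)) := recIn_of_primrec g3fn_primrec
  have hBC := RecIn.comp' hC hB
  refine (RecIn.comp' hBC hA).of_eq' ?_
  funext n
  have e1 : Part.some (q1fn n) >>= O
      = Part.some (f (min n.unpair.1 n.unpair.2) (max n.unpair.1 n.unpair.2)) := by
    refine (Part.bind_some (q1fn n) O).trans ?_
    exact hO1 _ _
  set v := f (min n.unpair.1 n.unpair.2) (max n.unpair.1 n.unpair.2) with hv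
  have hq2 : q2fn (Nat.pair n v)
      = 2 * Nat.pair (v / 2) (max n.unpair.1 n.unpair.2) + 1 := by
    simp [q2fn, Nat.unpair_pair]
  have e2 : O (q2fn (Nat.pair n v))
      = Part.some (if (max n.unpair.1 n.unpair.2) ∈ R (v / 2) then 1 else 0) := by
    rw [hq2]; exact hO2 _ _
  show (Nat.pair <$> Part.some n <*> (Part.some (q1fn n) >>= O)) >>=
      (fun m => (Nat.pair <$> Part.some m <*> (Part.some (q2fn m) >>= O)) >>=
        fun m => Part.some (g3fn m))
    = Part.some (if Tdef f R n.unpair.1 n.unpair.2 then 1 else 0)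
  rw [pair_seq_some n v _ e1]
  simp only [Part.bind_eq_bind, Part.bind_some]
  rw [pair_seq_some (Nat.pair n v) _ (Part.some (q2fn (Nat.pair n v)) >>= O)
    ((Part.bind_some _ O).trans e2)]
  simp only [Part.bind_eq_bind, Part.bind_some]
  have := g3fn_correct f R n.unpair.1 n.unpair.2
  rw [Nat.pair_unpair] at this
  rw [← hv] at this
  rw [this]

theorem Tdef_irrefl (f : ℕ → ℕ → ℕ) (R : ℕ → Set ℕ) (x : ℕ) : ¬ Tdef f R x x := by
  simp [Tdef]

theorem Tdef_asymm (f : ℕ → ℕ → ℕ) (R : ℕ → Set ℕ) {x y : ℕ} (h : x ≠ y) :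
    Tdef f R x y ↔ ¬ Tdef f R y x := by
  rcases lt_trichotomy x y with hlt | heq | hgt
  · simp [Tdef, hlt, lt_asymm hlt]
  · exact absurd heq h
  · simp [Tdef, hgt, lt_asymm hgt]


/-- From a stable coloring and a uniformly computable sequence of sets, one
builds an `(f ⊕ R⃗)`-computable tournament all of whose infinite transitive
subtournaments are thin for the limit coloring or `R⃗`-cohesive. -/
theorem stmt12 (f : ℕ → ℕ → ℕ) (F : ℕ → ℕ)
    (hstab : ∀ x, ∀ᶠ s in atTop, f x s = F x)
    (R : ℕ → Set ℕ)
    (hR : RecIn (chOracle ∅)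
      (fnOracle fun n => if n.unpair.2 ∈ R n.unpair.1 then 1 else 0)) :
    ∃ T : ℕ → ℕ → Prop,
      (∀ x, ¬ T x x) ∧
      (∀ x y : ℕ, x ≠ y → (T x y ↔ ¬ T y x)) ∧
      RecIn (joinO (pairFnOracle f)
          (fnOracle fun n => if n.unpair.2 ∈ R n.unpair.1 then 1 else 0))
        (fnOracle fun n => if T n.unpair.1 n.unpair.2 then 1 else 0) ∧
      ∀ H : Set ℕ, H.Infinite →
        (∀ x ∈ H, ∀ y ∈ H, ∀ z ∈ H, T x y → T y z → T x z) →
        (∃ c : ℕ, ∀ x ∈ H, F x ≠ c) ∨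
        (∀ i : ℕ, (H ∩ R i).Finite ∨ (H \ R i).Finite) := by
  refine ⟨Tdef f R, Tdef_irrefl f R, fun x y h => Tdef_asymm f R h, Tdef_recIn f R, ?_⟩
  intro H hinf htrans
  by_cases hthin : ∃ c : ℕ, ∀ x ∈ H, F x ≠ c
  · exact Or.inl hthin
  right
  intro i
  by_contra hcon
  push_neg at hcon
  obtain ⟨h1, h2⟩ := hcon
  push_neg at hthin
  obtain ⟨x, hxH, hfx⟩ := hthin (2 * i)
  obtain ⟨y, hyH, hfy⟩ := hthin (2 * i + 1)
  obtain ⟨N₁, hN₁⟩ := eventually_atTop.1 (hstab x)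
  obtain ⟨N₂, hN₂⟩ := eventually_atTop.1 (hstab y)
  obtain ⟨s₀, hs₀, hs₀gt⟩ := (Set.Infinite.exists_gt h1) (x + y + N₁ + N₂)
  obtain ⟨s₁, hs₁, hs₁gt⟩ := (Set.Infinite.exists_gt h2) (x + y + N₁ + N₂)
  have hxy : x ≠ y := by intro h; rw [h, hfy] at hfx; omega
  have exs0 : f x s₀ = 2 * i := by rw [hN₁ s₀ (by omega)]; exact hfx
  have eys0 : f y s₀ = 2 * i + 1 := by rw [hN₂ s₀ (by omega)]; exact hfy
  have exs1 : f x s₁ = 2 * i := by rw [hN₁ s₁ (by omega)]; exact hfx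
  have eys1 : f y s₁ = 2 * i + 1 := by rw [hN₂ s₁ (by omega)]; exact hfy
  have hd0 : (2 * i) / 2 = i := by omega
  have hm0 : (2 * i) % 2 = 0 := by omega
  have hd1 : (2 * i + 1) / 2 = i := by omega
  have hm1 : (2 * i + 1) % 2 = 1 := by omega
  have Txs₀ : Tdef f R x s₀ := Or.inl ⟨by omega, by
    simp only [Pdef, exs0, hd0, hm0]; simpa using hs₀.2⟩
  have Ts₀y : Tdef f R s₀ y := Or.inr ⟨by omega, by
    simp only [Pdef, eys0, hd1, hm1]; simpa using hs₀.2⟩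
  have Tys₁ : Tdef f R y s₁ := Or.inl ⟨by omega, by
    simp only [Pdef, eys1, hd1, hm1]; simpa using hs₁.2⟩
  have Ts₁x : Tdef f R s₁ x := Or.inr ⟨by omega, by
    simp only [Pdef, exs1, hd0, hm0]; simpa using hs₁.2⟩
  have Txy : Tdef f R x y := htrans x hxH s₀ hs₀.1 y hyH Txs₀ Ts₀y
  have Tyx : Tdef f R y x := htrans y hyH s₁ hs₁.1 x hxH Tys₁ Ts₁x
  exact (Tdef_asymm f R hxy).1 Txy Tyx


end
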